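/- arXiv:2412.01722 — 10 statements merged into one kernel-verified Lean document; each statement's English description precedes it below -/
import Mathlib

section
/- Let A be a bounded lattice that is a dense and compact sublattice of a complete lattice A^δ. Then the set of clopen elements of A^δ (elements that are both closed and open) is exactly A, i.e. A = K(A^δ) ∩ O(A^δ), where K(A^δ) is the set of meets of nonempty subsets of A and O(A^δ) is the set of joins of nonempty subsets of A. -/
variable {α : Type*} [CompleteLattice α]

/-- An element is closed if it is the meet of a nonempty subset of S. -/
def IsClosedElem (S : Set α) (k : α) : Prop :=
  ∃ F : Set α, F ⊆ S ∧ F.Nonempty ∧ k = sInf F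

/-- An element is open if it is the join of a nonempty subset of S. -/
def IsOpenElem (S : Set α) (o : α) : Prop :=
  ∃ I : Set α, I ⊆ S ∧ I.Nonempty ∧ o = sSup I

/-- S is dense: every element is a join of closed elements and a meet of open elements. -/
def IsDenseSub (S : Set α) : Prop :=
  ∀ u : α, u = sSup {k | IsClosedElem S k ∧ k ≤ u} ∧
           u = sInf {o | IsOpenElem S o ∧ u ≤ o}

/-- S is compact. -/
def IsCompactSub (S : Set α) : Prop :=
  ∀ F I : Set α, F ⊆ S → I ⊆ S → F.Nonempty → I.Nonempty → sInf F ≤ sSup I →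
    ∃ a ∈ F, ∃ b ∈ I, a ≤ b

/-- S is a bounded sublattice. -/
def IsBoundedSublattice (S : Set α) : Prop :=
  ⊥ ∈ S ∧ ⊤ ∈ S ∧ ∀ a ∈ S, ∀ b ∈ S, a ⊔ b ∈ S ∧ a ⊓ b ∈ S

theorem stmt0 (S : Set α) (hS : IsBoundedSublattice S) (hd : IsDenseSub S)
    (hc : IsCompactSub S) :
    S = {x | IsClosedElem S x} ∩ {x | IsOpenElem S x} := by
  ext x
  constructor
  · intro hx
    exact ⟨⟨{x}, by simpa using hx, Set.singleton_nonempty x, by simp⟩,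
           ⟨{x}, by simpa using hx, Set.singleton_nonempty x, by simp⟩⟩
  · rintro ⟨⟨F, hF, hFne, rfl⟩, I, hI, hIne, hx⟩
    obtain ⟨a, ha, b, hb, hab⟩ := hc F I hF hI hFne hIne (hx ▸ le_refl _)
    have h1 : sInf F ≤ a := sInf_le ha
    have h2 : b ≤ sInf F := hx ▸ le_sSup hb
    have : sInf F = a := le_antisymm h1 (le_trans hab h2)
    exact this ▸ hF ha
end

section
/- Let A be a bounded lattice with canonical extension A^δ. For any closed elements k₁, k₂ ∈ K(A^δ) and any b ∈ A, if k₁ ∧ k₂ ≤ b then there exist a₁, a₂ ∈ A with k₁ ≤ a₁, k₂ ≤ a₂ and a₁ ∧ a₂ ≤ b. -/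
variable {α : Type*} [CompleteLattice α]

theorem stmt5 (S : Set α) (hS : IsBoundedSublattice S) (hd : IsDenseSub S)
    (hc : IsCompactSub S) (k₁ k₂ b : α)
    (hk₁ : IsClosedElem S k₁) (hk₂ : IsClosedElem S k₂) (hb : b ∈ S)
    (h : k₁ ⊓ k₂ ≤ b) :
    ∃ a₁ ∈ S, ∃ a₂ ∈ S, k₁ ≤ a₁ ∧ k₂ ≤ a₂ ∧ a₁ ⊓ a₂ ≤ b := by
  obtain ⟨F₁, hF₁S, hF₁ne, hk₁e⟩ := hk₁
  obtain ⟨F₂, hF₂S, hF₂ne, hk₂e⟩ := hk₂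
  set G : Set α := {x | ∃ a₁ ∈ F₁, ∃ a₂ ∈ F₂, x = a₁ ⊓ a₂} with hG
  have hGS : G ⊆ S := by
    rintro x ⟨a₁, h₁, a₂, h₂, rfl⟩
    exact (hS.2.2 a₁ (hF₁S h₁) a₂ (hF₂S h₂)).2
  have hGne : G.Nonempty := by
    obtain ⟨a₁, h₁⟩ := hF₁ne; obtain ⟨a₂, h₂⟩ := hF₂ne
    exact ⟨a₁ ⊓ a₂, a₁, h₁, a₂, h₂, rfl⟩
  have hGle : sInf G ≤ b := by
    refine le_trans (le_trans ?_ h) le_rfl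
    refine le_inf ?_ ?_
    · rw [hk₁e]
      refine le_sInf fun a₁ h₁ => ?_
      obtain ⟨a₂, h₂⟩ := hF₂ne
      exact le_trans (sInf_le ⟨a₁, h₁, a₂, h₂, rfl⟩) inf_le_left
    · rw [hk₂e]
      refine le_sInf fun a₂ h₂ => ?_
      obtain ⟨a₁, h₁⟩ := hF₁ne
      exact le_trans (sInf_le ⟨a₁, h₁, a₂, h₂, rfl⟩) inf_le_right
  obtain ⟨x, hxG, c, hc', hxc⟩ :=
    hc G {b} hGS (by simpa using hb) hGne ⟨b, rfl⟩ (by simpa using hGle)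
  obtain ⟨a₁, h₁, a₂, h₂, rfl⟩ := hxG
  obtain rfl : c = b := hc'
  exact ⟨a₁, hF₁S h₁, a₂, hF₂S h₂, hk₁e ▸ sInf_le h₁, hk₂e ▸ sInf_le h₂, hxc⟩
end

section
/- Let A be a bounded lattice with canonical extension A^δ. For closed elements k₁, k₂ and an open element o, if k₁ ∧ k₂ ≤ o then there exist a₁, a₂, b ∈ A with k₁ ≤ a₁, k₂ ≤ a₂, b ≤ o, and a₁ ∧ a₂ ≤ b. -/
variable {α : Type*} [CompleteLattice α]

theorem stmt6 (S : Set α) (hS : IsBoundedSublattice S) (hd : IsDenseSub S)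
    (hc : IsCompactSub S) (k₁ k₂ o : α)
    (hk₁ : IsClosedElem S k₁) (hk₂ : IsClosedElem S k₂) (ho : IsOpenElem S o)
    (h : k₁ ⊓ k₂ ≤ o) :
    ∃ a₁ ∈ S, ∃ a₂ ∈ S, ∃ b ∈ S, k₁ ≤ a₁ ∧ k₂ ≤ a₂ ∧ b ≤ o ∧ a₁ ⊓ a₂ ≤ b := by
  obtain ⟨F₁, hF₁S, hF₁ne, rfl⟩ := hk₁
  obtain ⟨F₂, hF₂S, hF₂ne, rfl⟩ := hk₂
  obtain ⟨I, hIS, hIne, rfl⟩ := ho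
  rw [← sInf_union] at h
  obtain ⟨a, ha, b, hb, hab⟩ := hc (F₁ ∪ F₂) I (Set.union_subset hF₁S hF₂S) hIS
    (hF₁ne.mono Set.subset_union_left) hIne h
  rcases ha with ha | ha
  · exact ⟨a, hF₁S ha, ⊤, hS.2.1, b, hIS hb, sInf_le ha, le_top,
      le_sSup hb, by simpa using hab⟩
  · exact ⟨⊤, hS.2.1, a, hF₂S ha, b, hIS hb, le_top, sInf_le ha,
      le_sSup hb, by simpa using hab⟩
end

section
/- Let A be a bounded lattice with canonical extension A^δ. For any a ∈ A and open elements o₁, o₂ ∈ O(A^δ), if a ≤ o₁ ∨ o₂ then there exist b₁, b₂ ∈ A with b₁ ≤ o₁, b₂ ≤ o₂, and a ≤ b₁ ∨ b₂. -/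
variable {α : Type*} [CompleteLattice α]

theorem stmt8 (S : Set α) (hS : IsBoundedSublattice S) (hd : IsDenseSub S)
    (hc : IsCompactSub S) (a o₁ o₂ : α)
    (ha : a ∈ S) (ho₁ : IsOpenElem S o₁) (ho₂ : IsOpenElem S o₂)
    (h : a ≤ o₁ ⊔ o₂) :
    ∃ b₁ ∈ S, ∃ b₂ ∈ S, b₁ ≤ o₁ ∧ b₂ ≤ o₂ ∧ a ≤ b₁ ⊔ b₂ := by
  obtain ⟨I₁, hI₁S, ⟨y₁, hy₁⟩, rfl⟩ := ho₁
  obtain ⟨I₂, hI₂S, ⟨y₂, hy₂⟩, rfl⟩ := ho₂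
  set J : Set α := {z | ∃ x ∈ I₁, ∃ y ∈ I₂, z = x ⊔ y} with hJ
  have hJS : J ⊆ S := by
    rintro z ⟨x, hx, y, hy, rfl⟩
    exact (hS.2.2 x (hI₁S hx) y (hI₂S hy)).1
  have h1 : sSup I₁ ⊔ sSup I₂ ≤ sSup J := by
    apply sup_le
    · exact sSup_le fun x hx => le_sSup_of_le ⟨x, hx, y₂, hy₂, rfl⟩ le_sup_left
    · exact sSup_le fun y hy => le_sSup_of_le ⟨y₁, hy₁, y, hy, rfl⟩ le_sup_right
  have := hc {a} J (by simpa using ha) hJS ⟨a, rfl⟩ ⟨y₁ ⊔ y₂, y₁, hy₁, y₂, hy₂, rfl⟩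
    (by simpa using h.trans h1)
  obtain ⟨a', ha', z, ⟨x, hx, y, hy, rfl⟩, hle⟩ := this
  rcases ha' with rfl
  exact ⟨x, hI₁S hx, y, hI₂S hy, le_sSup hx, le_sSup hy, hle⟩
end

section
/- Let A be a bounded lattice with canonical extension A^δ, and let k ∈ K(A^δ) be closed and o₁, o₂ ∈ O(A^δ) open. If k ≤ o₁ ∨ o₂ then there exist a, b₁, b₂ ∈ A with k ≤ a, b₁ ≤ o₁, b₂ ≤ o₂, and a ≤ b₁ ∨ b₂. -/
variable {α : Type*} [CompleteLattice α]

theorem stmt9 (S : Set α) (hS : IsBoundedSublattice S) (hd : IsDenseSub S)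
    (hc : IsCompactSub S) (k o₁ o₂ : α)
    (hk : IsClosedElem S k) (ho₁ : IsOpenElem S o₁) (ho₂ : IsOpenElem S o₂)
    (h : k ≤ o₁ ⊔ o₂) :
    ∃ a ∈ S, ∃ b₁ ∈ S, ∃ b₂ ∈ S, k ≤ a ∧ b₁ ≤ o₁ ∧ b₂ ≤ o₂ ∧ a ≤ b₁ ⊔ b₂ := by
  obtain ⟨F, hFS, hFne, hkF⟩ := hk
  obtain ⟨I₁, hI₁S, hI₁ne, ho1⟩ := ho₁
  obtain ⟨I₂, hI₂S, hI₂ne, ho2⟩ := ho₂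
  set J : Set α := Set.image2 (· ⊔ ·) I₁ I₂ with hJ
  have hJS : J ⊆ S := by
    rintro x ⟨b₁, hb₁, b₂, hb₂, rfl⟩
    exact (hS.2.2 b₁ (hI₁S hb₁) b₂ (hI₂S hb₂)).1
  have hJne : J.Nonempty := hI₁ne.image2 hI₂ne
  have hle : sInf F ≤ sSup J := by
    rw [← hkF]
    refine h.trans (sup_le ?_ ?_)
    · rw [ho1]
      obtain ⟨c, hc⟩ := hI₂ne
      exact sSup_le fun b hb => le_sSup_of_le ⟨b, hb, c, hc, rfl⟩ le_sup_left
    · rw [ho2]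
      obtain ⟨c, hc⟩ := hI₁ne
      exact sSup_le fun b hb => le_sSup_of_le ⟨c, hc, b, hb, rfl⟩ le_sup_right
  obtain ⟨a, haF, x, hxJ, hax⟩ := hc F J hFS hJS hFne hJne hle
  obtain ⟨b₁, hb₁, b₂, hb₂, rfl⟩ := hxJ
  exact ⟨a, hFS haF, b₁, hI₁S hb₁, b₂, hI₂S hb₂, hkF ▸ sInf_le haF,
    ho1 ▸ le_sSup hb₁, ho2 ▸ le_sSup hb₂, hax⟩
end

section
/- Let A be a bounded lattice equipped with a subordination relation ≺ and canonical extension A^δ. Define ◇ : A → A^δ by ◇a = ⋀{b ∈ A | a ≺ b}. Then for all a, b ∈ A: ◇a ≤ b (in A^δ) if and only if a ≺ b. -/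
variable {α : Type*} [CompleteLattice α]

/-- A subordination relation on the sublattice S. -/
def IsSubordination (S : Set α) (R : α → α → Prop) : Prop :=
  R ⊥ ⊥ ∧ R ⊤ ⊤ ∧
  (∀ a ∈ S, ∀ b ∈ S, ∀ c ∈ S, R a b → R a c → R a (b ⊓ c)) ∧
  (∀ a ∈ S, ∀ b ∈ S, ∀ c ∈ S, R a c → R b c → R (a ⊔ b) c) ∧
  (∀ a ∈ S, ∀ b ∈ S, ∀ c ∈ S, ∀ d ∈ S, a ≤ b → R b c → c ≤ d → R a d)

theorem stmt10 (S : Set α) (hS : IsBoundedSublattice S) (hd : IsDenseSub S)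
    (hc : IsCompactSub S) (R : α → α → Prop) (hR : IsSubordination S R) :
    ∀ a ∈ S, ∀ b ∈ S, (sInf {c | c ∈ S ∧ R a c} ≤ b ↔ R a b) := by
  obtain ⟨hbot, htop, hcl⟩ := hS
  obtain ⟨r1, r2, r3, r4, r5⟩ := hR
  intro a ha b hb
  constructor
  · intro h
    have hFne : (⊤ : α) ∈ {c | c ∈ S ∧ R a c} :=
      ⟨htop, r5 a ha ⊤ htop ⊤ htop ⊤ htop le_top r2 le_rfl⟩
    have hsup : sSup ({b} : Set α) = b := sSup_singleton
    obtain ⟨c, hc1, b', hb', hcb⟩ := hc {c | c ∈ S ∧ R a c} {b}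
      (fun x hx => hx.1) (by simpa using hb) ⟨⊤, hFne⟩ ⟨b, rfl⟩ (by rw [hsup]; exact h)
    rw [Set.mem_singleton_iff] at hb'; rw [hb'] at hcb
    exact r5 a ha a ha c hc1.1 b hb le_rfl hc1.2 hcb
  · intro h
    exact sInf_le ⟨hb, h⟩
end

section
/- Let A be a bounded lattice equipped with a subordination relation ≺ and canonical extension A^δ. Define ■ : A → A^δ by ■a = ⋁{b ∈ A | b ≺ a}. Then for all a, b ∈ A: a ≤ ■b (in A^δ) if and only if a ≺ b. -/
variable {α : Type*} [CompleteLattice α]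

theorem stmt11 (S : Set α) (hS : IsBoundedSublattice S) (hd : IsDenseSub S)
    (hc : IsCompactSub S) (R : α → α → Prop) (hR : IsSubordination S R) :
    ∀ a ∈ S, ∀ b ∈ S, (a ≤ sSup {c | c ∈ S ∧ R c b} ↔ R a b) := by
  obtain ⟨hbot, htop, hcl⟩ := hS
  obtain ⟨hRb, hRt, h2, h3, h4⟩ := hR
  intro a ha b hb
  constructor
  · intro hle
    have hbotb : R ⊥ b := h4 ⊥ hbot ⊥ hbot ⊥ hbot b hb le_rfl hRb bot_le
    obtain ⟨x, hx, y, hy, hxy⟩ := hc {a} {c | c ∈ S ∧ R c b}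
      (by simpa using ha) (fun c hc => hc.1) ⟨a, rfl⟩ ⟨⊥, hbot, hbotb⟩
      (by simpa using hle)
    rcases hx with rfl
    exact h4 x ha y hy.1 b hb b hb hxy hy.2 le_rfl
  · intro h
    exact le_sSup ⟨ha, h⟩
end

section
/- Let A be a bounded lattice with a subordination relation ≺ and canonical extension A^δ, and let ◇a = ⋀{b ∈ A | a ≺ b}. Extend ◇ to closed elements by ◇^σ k = ⋀{◇a | a ∈ A, k ≤ a}. Then for any closed element k and any b ∈ A, if ◇^σ k ≤ b then there exists a ∈ A with k ≤ a and a ≺ b. -/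
variable {α : Type*} [CompleteLattice α]

/-- The slanted diamond on elements of S. -/
def diaA (S : Set α) (R : α → α → Prop) (a : α) : α :=
  sInf {b | b ∈ S ∧ R a b}

/-- The sigma-extension of the diamond to closed elements. -/
def diaK (S : Set α) (R : α → α → Prop) (k : α) : α :=
  sInf (diaA S R '' {a | a ∈ S ∧ k ≤ a})

theorem stmt14 (S : Set α) (hS : IsBoundedSublattice S) (hd : IsDenseSub S)
    (hc : IsCompactSub S) (R : α → α → Prop) (hR : IsSubordination S R)
    (k b : α) (hk : IsClosedElem S k) (hb : b ∈ S)
    (h : diaK S R k ≤ b) :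
    ∃ a ∈ S, k ≤ a ∧ R a b := by
  set F : Set α := {c | c ∈ S ∧ ∃ a, a ∈ S ∧ k ≤ a ∧ R a c} with hF
  have hFS : F ⊆ S := fun c hc => hc.1
  obtain ⟨hbot, htop, hS2, hS3, hS4⟩ := hR
  have hFne : F.Nonempty := ⟨⊤, hS.2.1, ⊤, hS.2.1, le_top, htop⟩
  have hle : sInf F ≤ diaK S R k := by
    apply le_sInf
    rintro x ⟨a, ⟨haS, hka⟩, rfl⟩
    exact le_sInf fun c ⟨hcS, hRac⟩ => sInf_le ⟨hcS, a, haS, hka, hRac⟩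
  have hcomp := hc F {b} hFS (by simpa) hFne ⟨b, rfl⟩
    (by simpa using hle.trans h)
  obtain ⟨c, ⟨hcS, a, haS, hka, hRac⟩, b', hb', hcb⟩ := hcomp
  rw [Set.mem_singleton_iff] at hb'
  subst hb'
  exact ⟨a, haS, hka, hS4 a haS a haS c hcS _ hb le_rfl hRac hcb⟩
end

section
/- Let A be a bounded lattice with a subordination relation ≺ and canonical extension A^δ, and define ■a = ⋁{b ∈ A | b ≺ a}. Extend ■ to open elements by ■^π o = ⋁{■a | a ∈ A, a ≤ o}. Then for any open element o and any a ∈ A, if a ≤ ■^π o then there exists b ∈ A with b ≤ o and a ≺ b. -/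
variable {α : Type*} [CompleteLattice α]

/-- The slanted box on elements of S. -/
def boxA (S : Set α) (R : α → α → Prop) (a : α) : α :=
  sSup {b | b ∈ S ∧ R b a}

/-- The pi-extension of the box to open elements. -/
def boxO (S : Set α) (R : α → α → Prop) (o : α) : α :=
  sSup (boxA S R '' {a | a ∈ S ∧ a ≤ o})

theorem stmt15 (S : Set α) (hS : IsBoundedSublattice S) (hd : IsDenseSub S)
    (hc : IsCompactSub S) (R : α → α → Prop) (hR : IsSubordination S R)
    (o a : α) (ho : IsOpenElem S o) (ha : a ∈ S)
    (h : a ≤ boxO S R o) :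
    ∃ b ∈ S, b ≤ o ∧ R a b := by
  obtain ⟨I0, hI0S, hI0ne, ho_eq⟩ := ho
  obtain ⟨c0, hc0⟩ := hI0ne
  have hc0S : c0 ∈ S := hI0S hc0
  have hc0o : c0 ≤ o := ho_eq ▸ le_sSup hc0
  obtain ⟨hbot, -, -, -, hS4⟩ := hR
  set U : Set α := {b | b ∈ S ∧ ∃ c, c ∈ S ∧ c ≤ o ∧ R b c} with hU
  have hUS : U ⊆ S := fun b hb => hb.1
  have hUne : U.Nonempty := ⟨⊥, hS.1, c0, hc0S, hc0o,
    hS4 ⊥ hS.1 ⊥ hS.1 ⊥ hS.1 c0 hc0S le_rfl hbot bot_le⟩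
  have hle : a ≤ sSup U := by
    refine h.trans (sSup_le ?_)
    rintro x ⟨c, ⟨hcS, hco⟩, rfl⟩
    refine sSup_le fun b hb => le_sSup ?_
    exact ⟨hb.1, c, hcS, hco, hb.2⟩
  obtain ⟨a', ha', b, hbU, hab⟩ := hc {a} U (by simpa using ha) hUS ⟨a, rfl⟩ hUne
    (by simpa using hle)
  rw [Set.mem_singleton_iff] at ha'
  subst ha'
  obtain ⟨hbS, c, hcS, hco, hRbc⟩ := hbU
  exact ⟨c, hcS, hco, hS4 a' ha b hbS c hcS c hcS hab hRbc le_rfl⟩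
end

section
/- Let A be a bounded lattice with a subordination relation ≺, canonical extension A^δ, and ◇a = ⋀{b | a ≺ b} extended by ◇^σ k = ⋀{◇a | k ≤ a, a ∈ A} on closed elements and ◇^σ u = ⋁{◇^σ k | k closed, k ≤ u} on arbitrary u ∈ A^δ. Then ◇^σ : A^δ → A^δ is completely join-preserving: ◇^σ(⋁ S) = ⋁{◇^σ u | u ∈ S} for every S ⊆ A^δ. -/
variable {α : Type*} [CompleteLattice α]

/-- The sigma-extension of the diamond to arbitrary elements. -/
def diaU (S : Set α) (R : α → α → Prop) (u : α) : α :=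
  sSup (diaK S R '' {k | IsClosedElem S k ∧ k ≤ u})

theorem stmt16 (S : Set α) (hS : IsBoundedSublattice S) (hd : IsDenseSub S)
    (hc : IsCompactSub S) (R : α → α → Prop) (hR : IsSubordination S R) :
    ∀ T : Set α, diaU S R (sSup T) = sSup (diaU S R '' T) := by
  obtain ⟨hbot, htop, hlat⟩ := hS
  obtain ⟨hRbot, hRtop, _, _, hS5⟩ := hR
  intro T
  apply le_antisymm
  · -- hard direction
    apply sSup_le
    rintro x ⟨k, ⟨⟨F, hFS, hFne, hkF⟩, hkle⟩, rfl⟩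
    set v := sSup (diaU S R '' T) with hv
    calc diaK S R k ≤ sInf {o | IsOpenElem S o ∧ v ≤ o} := by
          apply le_sInf
          rintro o ⟨⟨I, hIS, hIne, rfl⟩, hvo⟩
          -- G : elements a of S with some b ∈ S, R a b, b ≤ sSup I
          set G : Set α := {a | a ∈ S ∧ ∃ b ∈ S, R a b ∧ b ≤ sSup I} with hG
          have hGS : G ⊆ S := fun a ha => ha.1
          have hGne : G.Nonempty := ⟨⊥, hbot, ⊥, hbot, hRbot, bot_le⟩
          -- every u ∈ T is below sSup G
          have hTG : sSup T ≤ sSup G := by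
            apply sSup_le
            intro u huT
            calc u = sSup {m | IsClosedElem S m ∧ m ≤ u} := (hd u).1
              _ ≤ sSup G := by
                apply sSup_le
                rintro m ⟨hmcl, hmu⟩
                -- diaK m ≤ sSup I
                have h1 : diaK S R m ≤ sSup I := by
                  calc diaK S R m ≤ diaU S R u := le_sSup ⟨m, ⟨hmcl, hmu⟩, rfl⟩
                    _ ≤ v := le_sSup ⟨u, huT, rfl⟩
                    _ ≤ sSup I := hvo
                -- express diaK m as an inf of a subset of S
                set Fm : Set α := {b | ∃ a, a ∈ S ∧ m ≤ a ∧ b ∈ S ∧ R a b} with hFm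
                have hFmS : Fm ⊆ S := fun b hb => hb.choose_spec.2.2.1
                have hFmne : Fm.Nonempty := ⟨⊤, ⊤, htop, le_top, htop, hRtop⟩
                have h2 : sInf Fm ≤ diaK S R m := by
                  apply le_sInf
                  rintro x ⟨a, ⟨haS, hma⟩, rfl⟩
                  apply le_sInf
                  rintro b ⟨hbS, hRab⟩
                  exact sInf_le ⟨a, haS, hma, hbS, hRab⟩
                obtain ⟨b, hbFm, c, hcI, hbc⟩ :=
                  hc Fm I hFmS hIS hFmne hIne (h2.trans h1)
                obtain ⟨a, haS, hma, hbS, hRab⟩ := hbFm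
                exact hma.trans (le_sSup ⟨haS, b, hbS, hRab, hbc.trans (le_sSup hcI)⟩)
          -- compactness on F and G
          have hkG : sInf F ≤ sSup G := hkF ▸ (hkle.trans hTG)
          obtain ⟨f, hfF, a, haG, hfa⟩ := hc F G hFS hGS hFne hGne hkG
          obtain ⟨haS, b, hbS, hRab, hbI⟩ := haG
          have hka : k ≤ a := hkF ▸ (sInf_le hfF).trans hfa
          calc diaK S R k ≤ diaA S R a := sInf_le ⟨a, ⟨haS, hka⟩, rfl⟩
            _ ≤ b := sInf_le ⟨hbS, hRab⟩
            _ ≤ sSup I := hbI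
      _ = v := ((hd v).2).symm
  · -- easy direction: monotonicity
    apply sSup_le
    rintro x ⟨u, huT, rfl⟩
    apply sSup_le_sSup
    apply Set.image_mono
    rintro m ⟨hmcl, hmu⟩
    exact ⟨hmcl, hmu.trans (le_sSup huT)⟩
end
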